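/- Let n, m be natural numbers and A, B : ℤ → Matrix (Fin n) (Fin n) ℂ families of complex n×n matrices supported in [−m, m] and satisfying the reality conditions A(−k) = conj(A(k)) and B(−k) = conj(B(k)) for all k ∈ ℤ, where conj denotes entrywise complex conjugation. Then −i · ∑_{j=0}^{m} ∑_{r=−m}^{−j−1} ( tr(A(r)ᴴ · B(r)) − tr(B(r)ᴴ · A(r)) ) = i · ∑_{k=−m}^{m} k · tr( A(k)ᴴ · B(k) ). -/

import Mathlib

open Matrix

/-- Evaluation of the Hilbert–Schmidt symplectic form
`ω_HS(f_X, f_Y) = -i ∑_{j=0}^{m} ∑_{r=-m}^{-j-1} (tr(A_rᴴ B_r) - tr(B_rᴴ A_r))`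
on tangent vectors induced by loops with Fourier coefficients `A_k`, `B_k`
supported in `[-m, m]` and satisfying the reality conditions
`A(-k) = conj(A(k))`, `B(-k) = conj(B(k))`; it agrees with the loop-group value
`i ∑_{k=-m}^{m} k · tr(A_kᴴ B_k)`. -/
theorem hilbert_schmidt_form_eq_loop_form (n m : ℕ)
    (A B : ℤ → Matrix (Fin n) (Fin n) ℂ)
    (hAsupp : ∀ k : ℤ, k ∉ Finset.Icc (-(m:ℤ)) (m:ℤ) → A k = 0)
    (hBsupp : ∀ k : ℤ, k ∉ Finset.Icc (-(m:ℤ)) (m:ℤ) → B k = 0)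
    (hA : ∀ k : ℤ, A (-k) = (A k).map (starRingEnd ℂ))
    (hB : ∀ k : ℤ, B (-k) = (B k).map (starRingEnd ℂ)) :
    -Complex.I *
        ∑ j ∈ Finset.range (m + 1),
          ∑ r ∈ Finset.Icc (-(m:ℤ)) (-(j:ℤ) - 1),
            (((A r)ᴴ * B r).trace - ((B r)ᴴ * A r).trace)
      = Complex.I *
          ∑ k ∈ Finset.Icc (-(m:ℤ)) (m:ℤ), (k:ℂ) * ((A k)ᴴ * B k).trace := by
  set t : ℤ → ℂ := fun k => ((A k)ᴴ * B k).trace with ht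
  have L1 : ∀ k : ℤ, ((B k)ᴴ * A k).trace = starRingEnd ℂ (t k) := by
    intro k
    have h := Matrix.trace_conjTranspose ((A k)ᴴ * B k)
    rw [conjTranspose_mul, conjTranspose_conjTranspose] at h
    simpa [Complex.star_def] using h
  have L2 : ∀ k : ℤ, t (-k) = starRingEnd ℂ (t k) := by
    intro k
    simp only [ht, hA, hB, Matrix.trace, Matrix.diag, Matrix.mul_apply,
      Matrix.conjTranspose_apply, Matrix.map_apply, map_sum, _root_.map_mul,
      Complex.star_def, Complex.conj_conj]
  have hset1 : ∀ j : ℕ, (Finset.Icc (-(m:ℤ)) (-1:ℤ)).filter (fun r => (j:ℤ) ≤ -r - 1)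
      = Finset.Icc (-(m:ℤ)) (-(j:ℤ) - 1) := by
    intro j; ext r
    simp only [Finset.mem_filter, Finset.mem_Icc]
    omega
  have hset2 : ∀ r : ℤ, r ∈ Finset.Icc (-(m:ℤ)) (-1:ℤ) →
      (Finset.range (m+1)).filter (fun j : ℕ => (j:ℤ) ≤ -r - 1) = Finset.range ((-r).toNat) := by
    intro r hr
    rw [Finset.mem_Icc] at hr
    ext j
    simp only [Finset.mem_filter, Finset.mem_range]
    omega
  have hLHS : ∑ j ∈ Finset.range (m + 1),
      ∑ r ∈ Finset.Icc (-(m:ℤ)) (-(j:ℤ) - 1),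
        (((A r)ᴴ * B r).trace - ((B r)ᴴ * A r).trace)
      = ∑ k ∈ Finset.Icc (1:ℤ) (m:ℤ),
          (k:ℂ) * (starRingEnd ℂ (t k) - t k) := by
    have step1 : ∀ j : ℕ,
        ∑ r ∈ Finset.Icc (-(m:ℤ)) (-(j:ℤ) - 1),
          (((A r)ᴴ * B r).trace - ((B r)ᴴ * A r).trace)
        = ∑ r ∈ Finset.Icc (-(m:ℤ)) (-1:ℤ),
            if (j:ℤ) ≤ -r - 1 then (t r - starRingEnd ℂ (t r)) else 0 := by
      intro j
      rw [← Finset.sum_filter, hset1]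
      refine Finset.sum_congr rfl fun r hr => ?_
      rw [L1 r]
    calc ∑ j ∈ Finset.range (m + 1),
          ∑ r ∈ Finset.Icc (-(m:ℤ)) (-(j:ℤ) - 1),
            (((A r)ᴴ * B r).trace - ((B r)ᴴ * A r).trace)
        = ∑ j ∈ Finset.range (m + 1), ∑ r ∈ Finset.Icc (-(m:ℤ)) (-1:ℤ),
            if (j:ℤ) ≤ -r - 1 then (t r - starRingEnd ℂ (t r)) else 0 :=
          Finset.sum_congr rfl fun j _ => step1 j
      _ = ∑ r ∈ Finset.Icc (-(m:ℤ)) (-1:ℤ), ∑ j ∈ Finset.range (m + 1),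
            if (j:ℤ) ≤ -r - 1 then (t r - starRingEnd ℂ (t r)) else 0 :=
          Finset.sum_comm
      _ = ∑ r ∈ Finset.Icc (-(m:ℤ)) (-1:ℤ),
            (((-r).toNat : ℂ)) * (t r - starRingEnd ℂ (t r)) := by
          refine Finset.sum_congr rfl fun r hr => ?_
          rw [← Finset.sum_filter, hset2 r hr, Finset.sum_const, Finset.card_range,
            nsmul_eq_mul]
      _ = ∑ k ∈ Finset.Icc (1:ℤ) (m:ℤ), (k:ℂ) * (starRingEnd ℂ (t k) - t k) := by
          refine Finset.sum_nbij' (fun r => -r) (fun k => -k) ?_ ?_ ?_ ?_ ?_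
          · intro r hr; simp only [Finset.mem_Icc] at hr ⊢; omega
          · intro k hk; simp only [Finset.mem_Icc] at hk ⊢; omega
          · intro r _; simp
          · intro k _; simp
          · intro r hr
            rw [Finset.mem_Icc] at hr
            have h1 : (((-r).toNat : ℤ)) = -r := Int.toNat_of_nonneg (by omega)
            have h2 : t r = starRingEnd ℂ (t (-r)) := by
              have := L2 (-r); rw [neg_neg] at this; rw [this]
            have h3 : (((-r).toNat : ℂ)) = ((-r : ℤ) : ℂ) := by
              exact_mod_cast congrArg (Int.cast : ℤ → ℂ) h1
            rw [h2, Complex.conj_conj, h3]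
  have hsplit : Finset.Icc (-(m:ℤ)) (m:ℤ)
      = Finset.Icc (-(m:ℤ)) (-1:ℤ) ∪ Finset.Icc (0:ℤ) (m:ℤ) := by
    ext k; simp only [Finset.mem_union, Finset.mem_Icc]; omega
  have hdisj : Disjoint (Finset.Icc (-(m:ℤ)) (-1:ℤ)) (Finset.Icc (0:ℤ) (m:ℤ)) := by
    rw [Finset.disjoint_left]
    intro k hk hk'
    rw [Finset.mem_Icc] at hk hk'
    omega
  have hneg : ∑ k ∈ Finset.Icc (-(m:ℤ)) (-1:ℤ), (k:ℂ) * t k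
      = ∑ k ∈ Finset.Icc (1:ℤ) (m:ℤ), (-k : ℂ) * starRingEnd ℂ (t k) := by
    refine Finset.sum_nbij' (fun r => -r) (fun k => -k) ?_ ?_ ?_ ?_ ?_
    · intro r hr; simp only [Finset.mem_Icc] at hr ⊢; omega
    · intro k hk; simp only [Finset.mem_Icc] at hk ⊢; omega
    · intro r _; simp
    · intro k _; simp
    · intro r hr
      have h2 : t r = starRingEnd ℂ (t (-r)) := by
        have := L2 (-r); rw [neg_neg] at this; rw [this]
      rw [h2]
      push_cast
      ring
  have hzero : Finset.Icc (0:ℤ) (m:ℤ) = insert (0:ℤ) (Finset.Icc (1:ℤ) (m:ℤ)) := by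
    ext k; simp only [Finset.mem_insert, Finset.mem_Icc]; omega
  have hRHS : ∑ k ∈ Finset.Icc (-(m:ℤ)) (m:ℤ), (k:ℂ) * t k
      = ∑ k ∈ Finset.Icc (1:ℤ) (m:ℤ),
          ((-k : ℂ) * starRingEnd ℂ (t k) + (k:ℂ) * t k) := by
    rw [hsplit, Finset.sum_union hdisj, hneg, hzero, Finset.sum_insert (by simp)]
    simp only [Int.cast_zero, zero_mul, zero_add, ← Finset.sum_add_distrib]
  show -Complex.I * _ = Complex.I * ∑ k ∈ Finset.Icc (-(m:ℤ)) (m:ℤ), (k:ℂ) * t k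
  rw [hLHS, hRHS, Finset.mul_sum, Finset.mul_sum]
  refine Finset.sum_congr rfl fun k _ => ?_
  ring
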